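/- Let f be real-analytic near its simple root α. Define Weerakoon's iteration map F(x) = x - 2 f(x)/(f'(x) + f'(y(x))), where y(x) = x - f(x)/f'(x), for x near α (so that f'(x) ≠ 0 and f'(x) + f'(y(x)) ≠ 0). Then as x → α, F(x) - α = (c₂² + c₃/2)·(x - α)³ + O((x - α)⁴); in particular Weerakoon's method is of third order and is the instance of the weighted Newton method x ↦ x - A(f'(y)/f'(x)) f(x)/f'(x) with weight A(t) = 2/(1+t). -/

import Mathlib

open Filter Asymptotics

open Topology

lemma taylor_bigO {g : ℝ → ℝ} {α : ℝ} (hg : AnalyticAt ℝ g α) (n : ℕ) :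
    (fun x => g x - ∑ k ∈ Finset.range n,
        (iteratedDeriv k g α / (k.factorial : ℝ)) * (x - α) ^ k)
      =O[𝓝 α] fun x => (x - α) ^ n := by
  obtain ⟨p, hp⟩ := hg
  have hcoeff : ∀ k, iteratedDeriv k g α / (k.factorial : ℝ) = p.coeff k := by
    intro k
    obtain ⟨r, hpr⟩ := hp
    have h := hpr.factorial_smul (1 : ℝ) k
    rw [iteratedDeriv, ← h, FormalMultilinearSeries.coeff, nsmul_eq_mul]
    field_simp
    rfl
  have ht : Tendsto (fun x : ℝ => x - α) (𝓝 α) (𝓝 0) := by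
    have : Tendsto (fun x : ℝ => x - α) (𝓝 α) (𝓝 (α - α)) :=
      ((continuous_id.sub continuous_const).tendsto α)
    simpa using this
  have h2 := (hp.isBigO_sub_partialSum_pow n).comp_tendsto ht
  simp only [Function.comp_def, add_sub_cancel] at h2
  have h3 : (fun x => g x - p.partialSum n (x - α)) =O[𝓝 α] fun x => (x - α) ^ n := by
    calc (fun x => g x - p.partialSum n (x - α)) =O[𝓝 α] (fun x => ‖x - α‖ ^ n) := h2
    _ =O[𝓝 α] fun x => (x - α) ^ n := by
        apply IsBigO.of_bound 1
        filter_upwards with x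
        simp [abs_pow]
  refine h3.congr_left fun x => ?_
  unfold FormalMultilinearSeries.partialSum
  congr 1
  refine Finset.sum_congr rfl fun k _ => ?_
  rw [FormalMultilinearSeries.apply_eq_pow_smul_coeff, hcoeff k, smul_eq_mul, mul_comm]


/-- Weerakoon's method `F(x) = x - 2f(x)/(f'(x) + f'(y(x)))`, `y(x) = x - f(x)/f'(x)`,
is of third order: `F(x) - α = (c₂² + c₃/2)·(x - α)³ + O((x - α)⁴)` as `x → α`;
moreover it is the weighted Newton method with weight `A(t) = 2/(1+t)`. -/
theorem third_order_weerakoon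
    (f : ℝ → ℝ) (α : ℝ)
    (hf : AnalyticAt ℝ f α) (hroot : f α = 0) (hder : deriv f α ≠ 0) :
    let c₂ := iteratedDeriv 2 f α / ((Nat.factorial 2 : ℝ) * deriv f α)
    let c₃ := iteratedDeriv 3 f α / ((Nat.factorial 3 : ℝ) * deriv f α)
    let y : ℝ → ℝ := fun x => x - f x / deriv f x
    let F : ℝ → ℝ := fun x => x - 2 * f x / (deriv f x + deriv f (y x))
    let A : ℝ → ℝ := fun t => 2 / (1 + t)
    ((fun x => F x - α - (c₂^2 + c₃/2) * (x - α)^3)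
      =O[nhds α] (fun x => (x - α)^4)) ∧
    (∀ x, deriv f x ≠ 0 → deriv f x + deriv f (y x) ≠ 0 →
      F x = x - A (deriv f (y x) / deriv f x) * (f x / deriv f x)) := by
  intro c₂ c₃ y F A
  constructor
  · 
    -- big-O branch
    set b₁ := deriv f α with hb₁
    set c : ℝ := c₂ ^ 2 + c₃ / 2 with hc
    -- analyticity / continuity of deriv f
    obtain ⟨s, hs, hfs⟩ := hf.exists_mem_nhds_analyticOnNhd
    have hd : AnalyticAt ℝ (deriv f) α := (hfs.deriv) α (mem_of_mem_nhds hs)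
    have hdc : ContinuousAt (deriv f) α := hd.continuousAt
    have hfc : ContinuousAt f α := hf.continuousAt
    -- coefficients
    have h2 : iteratedDeriv 2 f α = 2 * (c₂ * b₁) := by
      simp only [c₂, hb₁]
      field_simp
      ring
      rw [mul_inv_cancel_right₀ (show deriv f α ≠ 0 from hder)]
    have h3 : iteratedDeriv 3 f α = 6 * (c₃ * b₁) := by
      simp only [c₃, hb₁]
      field_simp
      norm_num [Nat.factorial]
      try ring
      rw [mul_inv_cancel_right₀ (show deriv f α ≠ 0 from hder)]
    -- abbreviation
    set u : ℝ → ℝ := fun x => x - α with hu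
    have htu : Tendsto u (𝓝 α) (𝓝 0) := by
      have : Tendsto (fun x : ℝ => x - α) (𝓝 α) (𝓝 (α - α)) :=
        ((continuous_id.sub continuous_const).tendsto α)
      simpa [hu] using this
    have hO1 : ∀ g : ℝ → ℝ, Continuous g → g =O[𝓝 α] (fun _ => (1 : ℝ)) :=
      fun g hg => (hg.tendsto α).isBigO_one ℝ
    have hpow : ∀ m n : ℕ, n ≤ m → (fun x => u x ^ m) =O[𝓝 α] fun x => u x ^ n := by
      intro m n hnm
      apply IsBigO.of_bound 1
      have h01 : ∀ᶠ z : ℝ in 𝓝 0, |z| ≤ 1 :=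
        eventually_of_mem (Metric.ball_mem_nhds (0:ℝ) one_pos) (fun z hz => by
          simpa [Real.dist_eq] using (Metric.mem_ball.1 hz).le)
      filter_upwards [htu.eventually h01] with x hx
      simp only [norm_pow, Real.norm_eq_abs, one_mul]
      exact pow_le_pow_of_le_one (abs_nonneg _) hx hnm
    -- model polynomials and remainders
    set Pf : ℝ → ℝ := fun x => b₁ * u x + c₂*b₁ * u x^2 + c₃*b₁ * u x^3 with hPf
    set Pd : ℝ → ℝ := fun x => b₁ + 2*c₂*b₁ * u x + 3*c₃*b₁ * u x^2 with hPd
    set R0 : ℝ → ℝ := fun x => f x - Pf x with hR0def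
    set R1 : ℝ → ℝ := fun x => deriv f x - Pd x with hR1def
    set R2 : ℝ → ℝ := fun x => deriv f (y x) - (b₁ + 2*c₂*b₁*(y x - α)) with hR2def
    have hR0 : R0 =O[𝓝 α] fun x => u x ^ 4 := by
      have := taylor_bigO hf 4
      refine this.congr_left fun x => ?_
      simp only [hR0def, hPf, hu, Finset.sum_range_succ, Finset.sum_range_zero,
        iteratedDeriv_zero, iteratedDeriv_one, hroot, h2, h3, ← hb₁]
      norm_num [Nat.factorial]
      try ring
    have hR1 : R1 =O[𝓝 α] fun x => u x ^ 3 := by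
      have := taylor_bigO hd 3
      refine this.congr_left fun x => ?_
      have e1 : iteratedDeriv 0 (deriv f) α = b₁ := by simp [iteratedDeriv_zero, hb₁]
      have e2 : iteratedDeriv 1 (deriv f) α = 2*(c₂*b₁) := by
        rw [← iteratedDeriv_succ']; exact h2
      have e3 : iteratedDeriv 2 (deriv f) α = 6*(c₃*b₁) := by
        rw [← iteratedDeriv_succ']; exact h3
      simp only [hR1def, hPd, hu, Finset.sum_range_succ, Finset.sum_range_zero, e1, e2, e3]
      norm_num [Nat.factorial]
      try ring
    have hT2 : (fun z => deriv f z - (b₁ + 2*c₂*b₁*(z - α))) =O[𝓝 α] fun z => (z - α) ^ 2 := by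
      have := taylor_bigO hd 2
      refine this.congr_left fun x => ?_
      have e1 : iteratedDeriv 0 (deriv f) α = b₁ := by simp [iteratedDeriv_zero, hb₁]
      have e2 : iteratedDeriv 1 (deriv f) α = 2*(c₂*b₁) := by
        rw [← iteratedDeriv_succ']; exact h2
      simp only [Finset.sum_range_succ, Finset.sum_range_zero, e1, e2]
      norm_num [Nat.factorial]
      try ring
      try exact Or.inl trivial
    -- y facts
    have hyα : y α = α := by simp [y, hroot]
    have hyc : ContinuousAt y α := by
      have h1 : ContinuousAt (fun x => f x / deriv f x) α := hfc.div hdc hder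
      exact (continuous_id.continuousAt).sub h1
    have hyt : Tendsto y (𝓝 α) (𝓝 α) := by
      have := hyc.tendsto; rwa [hyα] at this
    -- eventual nonvanishing
    have hx_ne : ∀ᶠ x in 𝓝 α, deriv f x ≠ 0 := hdc.eventually_ne hder
    have hdyc : ContinuousAt (fun x => deriv f (y x)) α := by
      have h0 : ContinuousAt (deriv f) (y α) := by rwa [hyα]
      exact h0.comp hyc
    have hDc : ContinuousAt (fun x => deriv f x + deriv f (y x)) α := hdc.add hdyc
    have hD_ne : ∀ᶠ x in 𝓝 α, deriv f x + deriv f (y x) ≠ 0 := by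
      apply hDc.eventually_ne
      rw [hyα, ← hb₁]
      intro h
      apply hder
      have : (2:ℝ) * b₁ = 0 := by rw [← h]; ring
      simpa [hb₁] using (mul_eq_zero.1 this).resolve_left two_ne_zero
    -- bounded inverses
    have hinvO : (fun x => (deriv f x)⁻¹) =O[𝓝 α] (fun _ => (1:ℝ)) :=
      ((hdc.inv₀ hder).tendsto).isBigO_one ℝ
    have hbinvO : (fun x => (b₁ * deriv f x)⁻¹) =O[𝓝 α] (fun _ => (1:ℝ)) :=
      (((continuousAt_const.mul hdc).inv₀ (mul_ne_zero hder hder)).tendsto).isBigO_one ℝ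
    have hDinvO : (fun x => (deriv f x + deriv f (y x))⁻¹) =O[𝓝 α] (fun _ => (1:ℝ)) := by
      refine ((hDc.inv₀ ?_).tendsto).isBigO_one ℝ
      rw [hyα, ← hb₁]
      intro h
      apply hder
      have : (2:ℝ) * b₁ = 0 := by rw [← h]; ring
      simpa [hb₁] using (mul_eq_zero.1 this).resolve_left two_ne_zero
    -- (u - c u³) = O(u)
    have hlin : (fun x => u x - c * u x ^ 3) =O[𝓝 α] fun x => u x ^ 1 := by
      have h1 : (fun x => u x) =O[𝓝 α] fun x => u x ^ 1 := by
        apply (isBigO_refl _ _).congr_right; intro x; rw [pow_one]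
      refine h1.sub ?_
      exact ((hpow 3 1 (by norm_num)).const_mul_left c)
    -- u f' - f = O(u²)
    have hNum : (fun x => u x * deriv f x - f x) =O[𝓝 α] fun x => u x ^ 2 := by
      have e1 : (fun x => u x * R1 x) =O[𝓝 α] fun x => u x ^ 2 := by
        have h := ((isBigO_refl u (𝓝 α)).mul hR1)
        have h' : (fun x => u x * R1 x) =O[𝓝 α] fun x => u x ^ 4 := by
          refine h.trans ?_
          apply (isBigO_refl _ _).congr_left; intro x; ring
        exact h'.trans (hpow 4 2 (by norm_num))
      have e2 : (fun x => u x * Pd x - Pf x) =O[𝓝 α] fun x => u x ^ 2 := by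
        have heq : (fun x => u x * Pd x - Pf x)
            = fun x => u x ^ 2 * (c₂*b₁ + 2*c₃*b₁ * (x - α)) := by
          funext x; simp only [hPd, hPf, hu]; ring
        rw [heq]
        refine ((isBigO_refl (fun x => u x ^ 2) (𝓝 α)).mul
          (hO1 _ (continuous_const.add (continuous_const.mul
            (continuous_id.sub continuous_const))))).congr_right fun x => ?_
        rw [mul_one]
      have e3 : R0 =O[𝓝 α] fun x => u x ^ 2 := hR0.trans (hpow 4 2 (by norm_num))
      refine ((e1.add e2).sub e3).congr_left fun x => ?_
      simp only [hR1def, hR0def]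
      ring
    -- y - α = O(u²)
    have hyO : (fun x => y x - α) =O[𝓝 α] fun x => u x ^ 2 := by
      have heq : ∀ᶠ x in 𝓝 α, (u x * deriv f x - f x) * (deriv f x)⁻¹ = y x - α := by
        filter_upwards [hx_ne] with x hx
        simp only [y, hu]
        field_simp
        ring
      refine ((hNum.mul hinvO).congr' heq ?_)
      filter_upwards with x
      rw [mul_one]
    -- R2 = O(u⁴)
    have hR2 : R2 =O[𝓝 α] fun x => u x ^ 4 := by
      have hcomp := hT2.comp_tendsto hyt
      simp only [Function.comp_def] at hcomp
      have hsq : (fun x => (y x - α) ^ 2) =O[𝓝 α] fun x => u x ^ 4 := by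
        have := hyO.mul hyO
        refine (this.congr (fun x => by ring) (fun x => by ring))
      exact (hR2def ▸ hcomp).trans hsq
    -- V = O(u²)
    set V : ℝ → ℝ := fun x => (u x - c * u x ^ 3) * (deriv f x)⁻¹ - u x / b₁ with hV
    have hVO : V =O[𝓝 α] fun x => u x ^ 2 := by
      set Nv : ℝ → ℝ := fun x => -(u x * R1 x) - (2*c₂*b₁*u x^2 + 3*c₃*b₁*u x^3) - c*b₁*u x^3
        with hNv
      have hNvO : Nv =O[𝓝 α] fun x => u x ^ 2 := by
        have e1 : (fun x => u x * R1 x) =O[𝓝 α] fun x => u x ^ 2 := by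
          have h := ((isBigO_refl u (𝓝 α)).mul hR1)
          have h' : (fun x => u x * R1 x) =O[𝓝 α] fun x => u x ^ 4 := by
            refine h.trans ?_
            apply (isBigO_refl _ _).congr_left; intro x; ring
          exact h'.trans (hpow 4 2 (by norm_num))
        have e2 : (fun x => 2*c₂*b₁*u x^2 + 3*c₃*b₁*u x^3) =O[𝓝 α] fun x => u x ^ 2 := by
          refine (((hpow 2 2 le_rfl).const_mul_left _).add ?_)
          exact ((hpow 3 2 (by norm_num)).const_mul_left _)
        have e3 : (fun x => c*b₁*u x^3) =O[𝓝 α] fun x => u x ^ 2 :=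
          ((hpow 3 2 (by norm_num)).const_mul_left _)
        exact (e1.neg_left.sub e2).sub e3
      have heq : ∀ᶠ x in 𝓝 α, Nv x * (b₁ * deriv f x)⁻¹ = V x := by
        filter_upwards [hx_ne] with x hx
        simp only [hNv, hV, hR1def, hPd]
        field_simp
        ring
      refine ((hNvO.mul hbinvO).congr' heq ?_)
      filter_upwards with x
      rw [mul_one]
    -- main polynomial part
    set W : ℝ → ℝ := fun x => (4*c₂*c₃*b₁ - 2*c*c₂*b₁) - 3*c*c₃*b₁ * (x - α) with hW
    set Q : ℝ → ℝ := fun x =>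
      (u x - c * u x ^ 3) * (Pd x + b₁) + 2*c₂ * u x * (u x * Pd x - Pf x) - 2 * Pf x with hQ
    have hQeq : Q = fun x => u x ^ 4 * W x := by
      funext x
      simp only [hQ, hW, hPd, hPf, hc, hu]
      ring
    have hQO : Q =O[𝓝 α] fun x => u x ^ 4 := by
      rw [hQeq]
      refine ((isBigO_refl (fun x => u x ^ 4) (𝓝 α)).mul
        (hO1 _ (continuous_const.sub (continuous_const.mul
          (continuous_id.sub continuous_const))))).congr_right fun x => ?_
      rw [mul_one]
    -- error terms
    have hE1 : (fun x => (u x - c*u x^3) * R1 x) =O[𝓝 α] fun x => u x ^ 4 :=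
      (hlin.mul hR1).congr_right fun x => by ring
    have hE2 : (fun x => 2*c₂*b₁*((u x * deriv f x - f x) * V x)) =O[𝓝 α] fun x => u x ^ 4 :=
      (((hNum.mul hVO).congr_right fun x => by ring).const_mul_left _)
    have hE3 : (fun x => 2*c₂*(u x^2 * R1 x - u x * R0 x)) =O[𝓝 α] fun x => u x ^ 4 := by
      have e1 : (fun x => u x ^ 2 * R1 x) =O[𝓝 α] fun x => u x ^ 4 := by
        have h := ((isBigO_refl (fun x => u x ^ 2) (𝓝 α)).mul hR1)
        have h' : (fun x => u x ^ 2 * R1 x) =O[𝓝 α] fun x => u x ^ 5 := by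
          refine h.trans ?_
          apply (isBigO_refl _ _).congr_left; intro x; ring
        exact h'.trans (hpow 5 4 (by norm_num))
      have e2 : (fun x => u x * R0 x) =O[𝓝 α] fun x => u x ^ 4 := by
        have h := ((isBigO_refl u (𝓝 α)).mul hR0)
        have h' : (fun x => u x * R0 x) =O[𝓝 α] fun x => u x ^ 5 := by
          refine h.trans ?_
          apply (isBigO_refl _ _).congr_left; intro x; ring
        exact h'.trans (hpow 5 4 (by norm_num))
      exact ((e1.sub e2).const_mul_left _)
    have hE4 : (fun x => (u x - c*u x^3) * R2 x) =O[𝓝 α] fun x => u x ^ 4 := by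
      have h := hlin.mul hR2
      have h' : (fun x => (u x - c*u x^3) * R2 x) =O[𝓝 α] fun x => u x ^ 5 := by
        refine h.trans ?_
        apply (isBigO_refl _ _).congr_left; intro x; ring
      exact h'.trans (hpow 5 4 (by norm_num))
    have hE5 : (fun x => -2 * R0 x) =O[𝓝 α] fun x => u x ^ 4 := hR0.const_mul_left _
    -- the numerator
    have hNident : ∀ᶠ x in 𝓝 α,
        Q x + (u x - c*u x^3) * R1 x + 2*c₂*b₁*((u x * deriv f x - f x) * V x)
          + 2*c₂*(u x^2 * R1 x - u x * R0 x) + (u x - c*u x^3) * R2 x + (-2 * R0 x)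
        = (u x - c * u x ^ 3) * (deriv f x + deriv f (y x)) - 2 * f x := by
      filter_upwards [hx_ne] with x hx
      have hy : y x - α = (u x * deriv f x - f x) * (deriv f x)⁻¹ := by
        simp only [y, hu]
        field_simp
        ring
      simp only [hQ, hR1def, hR0def, hR2def, hV, hy]
      field_simp
      ring
    have hNO : (fun x => (u x - c * u x ^ 3) * (deriv f x + deriv f (y x)) - 2 * f x)
        =O[𝓝 α] fun x => u x ^ 4 := by
      refine (((((hQO.add hE1).add hE2).add hE3).add hE4).add hE5).congr'
        hNident EventuallyEq.rfl
    -- final assembly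
    have hfinal : ∀ᶠ x in 𝓝 α,
        ((u x - c * u x ^ 3) * (deriv f x + deriv f (y x)) - 2 * f x)
          * (deriv f x + deriv f (y x))⁻¹
        = F x - α - c * u x ^ 3 := by
      filter_upwards [hD_ne] with x hD
      simp only [F, hu]
      field_simp
      ring
    have hfin := (hNO.mul hDinvO).congr' hfinal (by filter_upwards with x; rw [mul_one])
    simpa only [hu] using hfin
  · intro x hx hD
    have h1 : (1 : ℝ) + deriv f (y x) / deriv f x ≠ 0 := by
      have : (1 : ℝ) + deriv f (y x) / deriv f x
          = (deriv f x + deriv f (y x)) / deriv f x := by field_simp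
      rw [this]
      exact div_ne_zero hD hx
    simp only [F, A]
    field_simp
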